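/- Let R be a commutative Noetherian ring and let p be a prime ideal generated by a regular R-sequence x_1,...,x_s contained in the Jacobson radical of R. Then for every n ≥ 1, p^n is a p-primary ideal; in particular the n-th symbolic power p^{(n)} equals p^n. -/

import Mathlib

open Finset

/-- The finset of multidegrees on `Fin s` of total degree `n`. -/
private def Dg (s n : ℕ) : Finset (Fin s → ℕ) :=
  (Fintype.piFinset fun _ : Fin s => Finset.range (n+1)).filter fun ν => ∑ i, ν i = n

private lemma mem_Dg {s n : ℕ} {ν : Fin s → ℕ} : ν ∈ Dg s n ↔ ∑ i, ν i = n := by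
  constructor
  · exact fun h => (Finset.mem_filter.mp h).2
  · intro h
    refine Finset.mem_filter.mpr ⟨Fintype.mem_piFinset.mpr fun i => ?_, h⟩
    rw [Finset.mem_range, Nat.lt_succ_iff, ← h]
    exact Finset.single_le_sum (fun _ _ => Nat.zero_le _) (Finset.mem_univ i)

private lemma Dg_zero (s : ℕ) : Dg s 0 = {fun _ => 0} := by
  ext ν
  rw [mem_Dg, Finset.mem_singleton]
  constructor
  · intro h
    funext i
    exact (Finset.sum_eq_zero_iff.mp h) i (Finset.mem_univ i)
  · rintro rfl; simp

/-- Monomial in the `x i` with multidegree `ν`. -/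
private def mon {R : Type*} [CommRing R] {s : ℕ} (x : Fin s → R) (ν : Fin s → ℕ) : R :=
  ∏ i, x i ^ ν i

private lemma mon_zero {R : Type*} [CommRing R] {s : ℕ} (x : Fin s → R) :
    mon x (fun _ => 0) = 1 := by simp [mon]

private lemma mon_add {R : Type*} [CommRing R] {s : ℕ} (x : Fin s → R) (ν μ : Fin s → ℕ) :
    mon x (ν + μ) = mon x ν * mon x μ := by
  simp [mon, pow_add, Finset.prod_mul_distrib]

private lemma mon_single {R : Type*} [CommRing R] {s : ℕ} (x : Fin s → R) (i : Fin s) :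
    mon x (Pi.single i 1) = x i := by
  rw [mon, Finset.prod_eq_single i (fun j _ hj => by simp [Pi.single_eq_of_ne hj])
    (fun h => absurd (Finset.mem_univ i) h)]
  simp

private lemma pow_span_eq {R : Type*} [CommRing R] {s : ℕ} (x : Fin s → R) (n : ℕ) :
    Ideal.span (Set.range x) ^ n = Ideal.span (mon x '' {ν | ∑ i, ν i = n}) := by
  induction n with
  | zero =>
    rw [pow_zero, Ideal.one_eq_top, eq_comm, Ideal.eq_top_iff_one]
    exact Ideal.subset_span ⟨fun _ => 0, by simp, mon_zero x⟩
  | succ n ih =>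
    rw [pow_succ', ih, Ideal.span_mul_span']
    apply le_antisymm
    · rw [Ideal.span_le]
      rintro r ⟨-, ⟨i, rfl⟩, -, ⟨ν, hν, rfl⟩, rfl⟩
      have hν' : ∑ j, ν j = n := hν
      set δi : Fin s → ℕ := Pi.single i 1 with hδi
      refine Ideal.subset_span ⟨ν + δi, ?_, ?_⟩
      · simp only [Set.mem_setOf_eq, Pi.add_apply, Finset.sum_add_distrib, hν', hδi,
          Finset.sum_pi_single']
        simp
      · rw [mon_add, mon_single, mul_comm]
    · rw [Ideal.span_le]
      rintro r ⟨μ, hμ, rfl⟩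
      simp only [Set.mem_setOf_eq] at hμ
      have hex : ∃ i, μ i ≠ 0 := by
        by_contra h
        push_neg at h
        simp [Finset.sum_congr rfl fun i _ => h i] at hμ
      obtain ⟨i, hi⟩ := hex
      set δi : Fin s → ℕ := Pi.single i 1 with hδi
      set ν' : Fin s → ℕ := fun j => μ j - δi j with hν'def
      have hdec : ν' + δi = μ := by
        funext j
        by_cases hj : j = i
        · subst hj
          simp [hν'def, hδi, Nat.sub_add_cancel (Nat.one_le_iff_ne_zero.mpr hi)]
        · simp [hν'def, hδi, Pi.single_eq_of_ne hj]
      have hsum : ∑ j, ν' j = n := by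
        have h2 := congrArg (fun ν : Fin s → ℕ => ∑ j, ν j) hdec
        simp only [Pi.add_apply, Finset.sum_add_distrib, hδi, Finset.sum_pi_single'] at h2
        simp only [Finset.mem_univ, if_pos] at h2
        omega
      have hmon : mon x μ = x i * mon x ν' := by
        conv_lhs => rw [← hdec]
        rw [mon_add, mon_single, mul_comm]
      rw [hmon]
      exact Ideal.subset_span
        (Set.mul_mem_mul ⟨i, rfl⟩ ⟨ν', hsum, rfl⟩)

private lemma mon_mem {R : Type*} [CommRing R] {s : ℕ} (x : Fin s → R) {n : ℕ}
    {ν : Fin s → ℕ} (hν : ν ∈ Dg s n) : mon x ν ∈ Ideal.span (Set.range x) ^ n := by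
  rw [pow_span_eq]
  exact Ideal.subset_span ⟨ν, mem_Dg.mp hν, rfl⟩

private lemma rep_of_mem {R : Type*} [CommRing R] {s : ℕ} (x : Fin s → R) {n : ℕ} {b : R}
    (hb : b ∈ Ideal.span (Set.range x) ^ n) :
    ∃ c : (Fin s → ℕ) → R, b = ∑ ν ∈ Dg s n, c ν * mon x ν := by
  rw [pow_span_eq] at hb
  obtain ⟨l, hl, rfl⟩ := (Finsupp.mem_span_image_iff_linearCombination R).mp hb
  refine ⟨l, ?_⟩
  have hsub : l.support ⊆ Dg s n :=
    fun ν hν => mem_Dg.mpr ((Finsupp.mem_supported R l).mp hl hν)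
  rw [Finsupp.linearCombination_apply, Finsupp.sum]
  rw [Finset.sum_subset hsub (fun ν _ hν => by rw [Finsupp.notMem_support_iff.mp hν, zero_smul])]
  exact Finset.sum_congr rfl fun ν _ => smul_eq_mul _ _
private lemma Dg_split (s n : ℕ) :
    Dg (s+1) (n+1) =
      (Dg s (n+1)).image (fun μ => (Fin.snoc μ 0 : Fin (s+1) → ℕ)) ∪
      (Dg (s+1) n).image (fun μ => μ + Pi.single (Fin.last s) (1:ℕ)) := by
  ext ν
  simp only [Finset.mem_union, Finset.mem_image, mem_Dg]
  constructor
  · intro hν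
    by_cases h0 : ν (Fin.last s) = 0
    · left
      refine ⟨fun i => ν i.castSucc, ?_, ?_⟩
      · rw [Fin.sum_univ_castSucc, h0] at hν
        simpa using hν
      · funext i
        refine Fin.lastCases ?_ (fun j => ?_) i
        · rw [Fin.snoc_last, h0]
        · rw [Fin.snoc_castSucc]
    · right
      set μ : Fin (s+1) → ℕ := fun i => ν i - (Pi.single (Fin.last s) (1:ℕ) : Fin (s+1) → ℕ) i with hμdef
      have hdec : μ + Pi.single (Fin.last s) (1:ℕ) = ν := by
        funext i
        by_cases hi : i = Fin.last s
        · subst hi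
          simp [hμdef, Nat.sub_add_cancel (Nat.one_le_iff_ne_zero.mpr h0)]
        · simp [hμdef, Pi.single_eq_of_ne hi]
      refine ⟨μ, ?_, hdec⟩
      have h2 := congrArg (fun ν : Fin (s+1) → ℕ => ∑ j, ν j) hdec
      simp only [Pi.add_apply, Finset.sum_add_distrib, Finset.sum_pi_single'] at h2
      simp only [Finset.mem_univ, if_pos] at h2
      omega
  · rintro (⟨μ, hμ, rfl⟩ | ⟨μ, hμ, rfl⟩)
    · rw [Fin.sum_univ_castSucc]
      simpa using hμ
    · simp only [Pi.add_apply, Finset.sum_add_distrib, Finset.sum_pi_single']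
      simp [hμ]

private lemma sum_Dg_split {M : Type*} [AddCommMonoid M] (s n : ℕ)
    (f : (Fin (s+1) → ℕ) → M) :
    ∑ ν ∈ Dg (s+1) (n+1), f ν =
      (∑ μ ∈ Dg s (n+1), f (Fin.snoc μ 0)) +
      ∑ μ ∈ Dg (s+1) n, f (μ + Pi.single (Fin.last s) (1:ℕ)) := by
  have hdisj : Disjoint ((Dg s (n+1)).image (fun μ => (Fin.snoc μ 0 : Fin (s+1) → ℕ)))
      ((Dg (s+1) n).image (fun μ => μ + Pi.single (Fin.last s) (1:ℕ))) := by
    rw [Finset.disjoint_left]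
    intro ν h1 h2
    obtain ⟨μ, -, rfl⟩ := Finset.mem_image.mp h1
    obtain ⟨μ', -, hz⟩ := Finset.mem_image.mp h2
    have := congrFun hz (Fin.last s)
    simp [Fin.snoc_last] at this
  rw [Dg_split, Finset.sum_union hdisj, Finset.sum_image, Finset.sum_image]
  · intro a _ b _ h
    funext i
    have := congrFun h i
    simp only [Pi.add_apply] at this
    omega
  · intro a _ b _ h
    funext i
    have := congrFun h i.castSucc
    simpa [Fin.snoc_castSucc] using this
private lemma quasi_reg {R : Type*} [CommRing R] :
    ∀ (s : ℕ) (x : Fin s → R),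
      (∀ (k : Fin s) (b : R), x k * b ∈ Ideal.span (x '' {j | j < k}) →
        b ∈ Ideal.span (x '' {j | j < k})) →
      ∀ (n : ℕ) (c : (Fin s → ℕ) → R),
        (∑ ν ∈ Dg s n, c ν * mon x ν) ∈ Ideal.span (Set.range x) ^ (n + 1) →
        ∀ ν ∈ Dg s n, c ν ∈ Ideal.span (Set.range x) := by
  intro s
  induction s with
  | zero =>
    intro x _ n c hF ν hν
    have hn : n = 0 := by
      have := mem_Dg.mp hν
      simpa using this.symm
    subst hn
    rw [Dg_zero, Finset.sum_singleton, mon_zero, mul_one, pow_one] at hF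
    have hν0 : ν = fun _ => 0 := by
      rw [Dg_zero] at hν
      exact Finset.mem_singleton.mp hν
    rw [hν0]
    exact hF
  | succ s ihs =>
    intro x hx
    set x' : Fin s → R := fun i => x i.castSucc with hx'def
    set y : R := x (Fin.last s) with hydef
    set I' : Ideal R := Ideal.span (Set.range x') with hI'def
    set I : Ideal R := Ideal.span (Set.range x) with hIdef
    have hrange : Set.range x = Set.range x' ∪ {y} := by
      ext r
      constructor
      · rintro ⟨i, rfl⟩
        refine Fin.lastCases ?_ (fun j => ?_) i
        · right; rfl
        · left; exact ⟨j, rfl⟩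
      · rintro (⟨j, rfl⟩ | rfl)
        · exact ⟨j.castSucc, rfl⟩
        · exact ⟨Fin.last s, rfl⟩
    have hII : I = I' ⊔ Ideal.span {y} := by rw [hIdef, hrange, Ideal.span_union]
    have hI'I : I' ≤ I := by rw [hII]; exact le_sup_left
    have hyI : y ∈ I := by
      rw [hII]
      exact Submodule.mem_sup_right (Ideal.mem_span_singleton_self y)
    have hx' : ∀ (k : Fin s) (b : R), x' k * b ∈ Ideal.span (x' '' {j | j < k}) →
        b ∈ Ideal.span (x' '' {j | j < k}) := by
      intro k b hb
      have hset : Fin.castSucc '' {j : Fin s | j < k} = {j : Fin (s+1) | j < k.castSucc} := by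
        ext j
        constructor
        · rintro ⟨j0, hj0, rfl⟩
          exact Fin.castSucc_lt_castSucc_iff.mpr hj0
        · intro hj
          have hjv : (j : ℕ) < (k : ℕ) := by
            have h := Fin.lt_def.mp hj
            rwa [Fin.coe_castSucc] at h
          exact ⟨⟨j.1, lt_trans hjv k.isLt⟩, Fin.lt_def.mpr hjv, by ext; simp⟩
      have himg : x' '' {j | j < k} = x '' {j | j < k.castSucc} := by
        rw [show x' '' {j | j < k} = x '' (Fin.castSucc '' {j | j < k}) from
          (Set.image_image x Fin.castSucc _).symm, hset]
      rw [himg] at hb ⊢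
      exact hx k.castSucc b hb
    have hyreg : ∀ b : R, y * b ∈ I' → b ∈ I' := by
      intro b hb
      have himg : x '' {j | j < Fin.last s} = Set.range x' := by
        have hset : {j : Fin (s+1) | j < Fin.last s} = Set.range Fin.castSucc := by
          ext j
          constructor
          · intro hj
            have hjs : (j : ℕ) < s := by
              have h := Fin.lt_def.mp hj
              rwa [Fin.val_last] at h
            exact ⟨⟨j.1, hjs⟩, by ext; simp⟩
          · rintro ⟨j0, rfl⟩
            exact Fin.castSucc_lt_last j0
        rw [hset, ← Set.range_comp]
        rfl
      have h2 := hx (Fin.last s) b (by rw [himg]; exact hb)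
      rw [himg] at h2
      exact h2
    have qr' := ihs x' hx'
    have L3 : ∀ (k : ℕ) (b : R), y * b ∈ I' ^ k → b ∈ I' ^ k := by
      intro k b hyb
      suffices h : ∀ j, j ≤ k → b ∈ I' ^ j by exact h k le_rfl
      intro j
      induction j with
      | zero =>
        intro _
        rw [pow_zero, Ideal.one_eq_top]
        exact Submodule.mem_top
      | succ j ihj =>
        intro hjk
        obtain ⟨c, hc⟩ := rep_of_mem x' (ihj (le_trans (Nat.le_succ j) hjk))
        have h2 : (∑ ν ∈ Dg s j, (y * c ν) * mon x' ν) ∈ I' ^ (j + 1) := by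
          have he : ∑ ν ∈ Dg s j, (y * c ν) * mon x' ν = y * b := by
            rw [hc, Finset.mul_sum]
            exact Finset.sum_congr rfl fun ν _ => mul_assoc _ _ _
          rw [he]
          exact Ideal.pow_le_pow_right hjk hyb
        have h3 := qr' j (fun ν => y * c ν) h2
        rw [hc]
        refine Submodule.sum_mem _ fun ν hν => ?_
        rw [pow_succ']
        exact Ideal.mul_mem_mul (hyreg _ (h3 ν hν)) (mon_mem x' hν)
    have L2 : ∀ m : ℕ, I ^ (m + 1) ≤ I' ^ (m + 1) ⊔ Ideal.span {y} * I ^ m := by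
      intro m
      induction m with
      | zero =>
        rw [pow_one, pow_one, pow_zero, Ideal.one_eq_top, Ideal.mul_top]
        exact hII.le
      | succ m ihm =>
        have h1 : I' * I ^ (m + 1) ≤ I' ^ (m + 2) ⊔ Ideal.span {y} * I ^ (m + 1) := by
          calc I' * I ^ (m + 1) ≤ I' * (I' ^ (m + 1) ⊔ Ideal.span {y} * I ^ m) :=
                Ideal.mul_mono_right ihm
            _ = I' * I' ^ (m + 1) ⊔ I' * (Ideal.span {y} * I ^ m) := Ideal.mul_sup _ _ _
            _ ≤ I' ^ (m + 2) ⊔ Ideal.span {y} * I ^ (m + 1) := by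
                refine sup_le_sup (le_of_eq (pow_succ' I' (m + 1)).symm) ?_
                have he : I' * (Ideal.span {y} * I ^ m) = Ideal.span {y} * (I' * I ^ m) := by
                  ring
                rw [he]
                refine Ideal.mul_mono_right ?_
                calc I' * I ^ m ≤ I * I ^ m := Ideal.mul_mono_left hI'I
                  _ = I ^ (m + 1) := (pow_succ' I m).symm
        calc I ^ (m + 2) = I * I ^ (m + 1) := pow_succ' I (m + 1)
          _ = (I' ⊔ Ideal.span {y}) * I ^ (m + 1) := by rw [← hII]
          _ = I' * I ^ (m + 1) ⊔ Ideal.span {y} * I ^ (m + 1) := Ideal.sup_mul _ _ _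
          _ ≤ (I' ^ (m + 2) ⊔ Ideal.span {y} * I ^ (m + 1)) ⊔ Ideal.span {y} * I ^ (m + 1) :=
              sup_le_sup_right h1 _
          _ = I' ^ (m + 2) ⊔ Ideal.span {y} * I ^ (m + 1) := by rw [sup_assoc, sup_idem]
    intro n
    induction n with
    | zero =>
      intro c hF ν hν
      rw [Dg_zero] at hν
      have hν0 := Finset.mem_singleton.mp hν
      rw [Dg_zero, Finset.sum_singleton, mon_zero, mul_one, pow_one] at hF
      rw [hν0]
      exact hF
    | succ n ihn =>
      intro c hF ν hν
      set e : (Fin s → ℕ) → (Fin (s+1) → ℕ) := fun μ => Fin.snoc μ 0 with hedef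
      set δ : Fin (s+1) → ℕ := Pi.single (Fin.last s) 1 with hδdef
      set G : R := ∑ μ ∈ Dg s (n+1), c (e μ) * mon x' μ with hGdef
      set H : R := ∑ μ ∈ Dg (s+1) n, c (μ + δ) * mon x μ with hHdef
      have hmon_e : ∀ μ : Fin s → ℕ, mon x (e μ) = mon x' μ := by
        intro μ
        simp only [mon]
        rw [Fin.prod_univ_castSucc]
        simp [hedef, Fin.snoc_castSucc, Fin.snoc_last, hx'def]
      have hmon_δ : ∀ μ : Fin (s+1) → ℕ, mon x (μ + δ) = mon x μ * y := by
        intro μ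
        rw [mon_add, hδdef, mon_single, hydef]
      have hsplit : ∑ ν' ∈ Dg (s+1) (n+1), c ν' * mon x ν' = G + y * H := by
        rw [sum_Dg_split s n (fun ν' => c ν' * mon x ν'), hGdef, hHdef, Finset.mul_sum]
        congr 1
        · exact Finset.sum_congr rfl fun μ _ => by rw [hmon_e]
        · exact Finset.sum_congr rfl fun μ _ => by rw [hmon_δ]; ring
      rw [hsplit] at hF
      have hGI' : G ∈ I' ^ (n + 1) := Submodule.sum_mem _ fun μ hμ =>
        Ideal.mul_mem_left _ _ (mon_mem x' hμ)
      obtain ⟨g, hg, w, hw, hgw⟩ := Submodule.mem_sup.mp (L2 (n + 1) hF)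
      obtain ⟨h1, hh1, hweq⟩ := Ideal.mem_span_singleton_mul.mp hw
      have key1 : y * (h1 - H) ∈ I' ^ (n + 1) := by
        have he : y * (h1 - H) = G - g := by linear_combination hweq + hgw
        rw [he]
        exact sub_mem hGI' (Ideal.pow_le_pow_right (Nat.le_succ _) hg)
      have hh1H : h1 - H ∈ I' ^ (n + 1) := L3 _ _ key1
      have hH : H ∈ I ^ (n + 1) := by
        have he : H = h1 - (h1 - H) := by ring
        rw [he]
        exact sub_mem hh1 (Ideal.pow_right_mono hI'I _ hh1H)
      have hHc := ihn (fun μ => c (μ + δ)) (by exact hH)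
      have hyH : y * H ∈ I ^ (n + 1 + 1) := by
        rw [pow_succ']
        exact Ideal.mul_mem_mul hyI hH
      have hG : G ∈ I ^ (n + 1 + 1) := by
        have he : G = (G + y * H) - y * H := by ring
        rw [he]
        exact sub_mem hF hyH
      obtain ⟨g', hg', w', hw', hgw'⟩ := Submodule.mem_sup.mp (L2 (n + 1) hG)
      obtain ⟨h2, hh2, hweq'⟩ := Ideal.mem_span_singleton_mul.mp hw'
      have key2 : y * h2 ∈ I' ^ (n + 1) := by
        have he : y * h2 = G - g' := by linear_combination hweq' + hgw'
        rw [he]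
        exact sub_mem hGI' (Ideal.pow_le_pow_right (Nat.le_succ _) hg')
      have hh2' : h2 ∈ I' ^ (n + 1) := L3 _ _ key2
      obtain ⟨k, hk⟩ := rep_of_mem x' hh2'
      have key3 : (∑ μ ∈ Dg s (n+1), (c (e μ) - y * k μ) * mon x' μ) ∈ I' ^ (n + 1 + 1) := by
        have he : ∑ μ ∈ Dg s (n+1), (c (e μ) - y * k μ) * mon x' μ = G - y * h2 := by
          rw [hk, Finset.mul_sum, hGdef, ← Finset.sum_sub_distrib]
          exact Finset.sum_congr rfl fun μ _ => by ring
        have he2 : G - y * h2 = g' := by linear_combination -hgw' - hweq'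
        rw [he, he2]
        exact hg'
      have hc' := qr' (n + 1) (fun μ => c (e μ) - y * k μ) key3
      rw [Dg_split s n] at hν
      rcases Finset.mem_union.mp hν with hcase | hcase
      · obtain ⟨μ, hμ, hνe⟩ := Finset.mem_image.mp hcase
        subst hνe
        show c (e μ) ∈ I
        have he : c (e μ) = (c (e μ) - y * k μ) + y * k μ := by ring
        rw [he]
        exact add_mem (hI'I (hc' μ hμ)) (Ideal.mul_mem_right _ _ hyI)
      · obtain ⟨μ, hμ, hνe⟩ := Finset.mem_image.mp hcase
        subst hνe
        show c (μ + δ) ∈ I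
        exact hHc μ hμ
private lemma smul_top_eq' {R : Type*} [CommRing R] (J : Ideal R) :
    (J • ⊤ : Submodule R R) = J := by
  rw [smul_eq_mul, Ideal.mul_top]

theorem stmt_6 {R : Type*} [CommRing R] [IsNoetherianRing R] {s : ℕ} (x : Fin s → R)
    (hreg : RingTheory.Sequence.IsRegular R (List.ofFn x))
    (hjac : ∀ i, x i ∈ Ideal.jacobson (⊥ : Ideal R))
    (p : Ideal R) (hp : p = Ideal.span (Set.range x)) (hprime : p.IsPrime) :
    ∀ n : ℕ, 1 ≤ n → (p ^ n).IsPrimary ∧ (p ^ n).radical = p ∧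
      {y : R | ∃ t ∉ p, t * y ∈ p ^ n} = ((p ^ n : Ideal R) : Set R) := by
  subst hp
  have hyp : ∀ (k : Fin s) (b : R), x k * b ∈ Ideal.span (x '' {j | j < k}) →
      b ∈ Ideal.span (x '' {j | j < k}) := by
    intro k b hb
    have hlen : (k : ℕ) < (List.ofFn x).length := by simpa using k.isLt
    have h1 := hreg.toIsWeaklyRegular.regular_mod_prev k.1 hlen
    have hxk : (List.ofFn x)[(k : ℕ)] = x k := by simp
    rw [hxk] at h1
    have hJ : Ideal.ofList ((List.ofFn x).take k.1) = Ideal.span (x '' {j | j < k}) := by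
      have hsets : {r | r ∈ (List.ofFn x).take k.1} = x '' {j | j < k} := by
        rw [← Fin.ofFn_take_eq_take_ofFn k.isLt.le x]
        ext r
        simp only [Set.mem_setOf_eq, List.mem_ofFn]
        constructor
        · rintro ⟨i, rfl⟩
          exact ⟨Fin.castLE k.isLt.le i, Fin.lt_def.mpr i.isLt, rfl⟩
        · rintro ⟨j, hj, rfl⟩
          exact ⟨⟨j.1, hj⟩, congrArg x (Fin.ext rfl)⟩
      show Ideal.span _ = _
      rw [hsets]
    rw [hJ] at h1
    have hq : (x k) • (Submodule.Quotient.mk b :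
        R ⧸ (Ideal.span (x '' {j | j < k}) • ⊤ : Submodule R R)) = x k • (0 : _) := by
      rw [smul_zero, ← Submodule.Quotient.mk_smul, Submodule.Quotient.mk_eq_zero,
        smul_top_eq', smul_eq_mul]
      exact hb
    have h2 := h1 hq
    rwa [Submodule.Quotient.mk_eq_zero, smul_top_eq'] at h2
  have hqr := quasi_reg s x hyp
  have key : ∀ (n : ℕ) (a b : R), a ∉ Ideal.span (Set.range x) →
      a * b ∈ Ideal.span (Set.range x) ^ n → b ∈ Ideal.span (Set.range x) ^ n := by
    intro n
    induction n with
    | zero =>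
      intro a b _ _
      rw [pow_zero, Ideal.one_eq_top]
      exact Submodule.mem_top
    | succ n ihn =>
      intro a b ha hab
      obtain ⟨c, hc⟩ := rep_of_mem x (ihn a b ha (Ideal.pow_le_pow_right (Nat.le_succ n) hab))
      have h2 : (∑ ν ∈ Dg s n, (a * c ν) * mon x ν) ∈ Ideal.span (Set.range x) ^ (n + 1) := by
        have he : ∑ ν ∈ Dg s n, (a * c ν) * mon x ν = a * b := by
          rw [hc, Finset.mul_sum]
          exact Finset.sum_congr rfl fun ν _ => mul_assoc _ _ _
        rw [he]
        exact hab
      have h3 := hqr n (fun ν => a * c ν) h2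
      rw [hc]
      refine Submodule.sum_mem _ fun ν hν => ?_
      rw [pow_succ']
      exact Ideal.mul_mem_mul ((hprime.mem_or_mem (h3 ν hν)).resolve_left ha) (mon_mem x hν)
  intro n hn
  have hn0 : n ≠ 0 := Nat.one_le_iff_ne_zero.mp hn
  have hrad : (Ideal.span (Set.range x) ^ n).radical = Ideal.span (Set.range x) := by
    rw [Ideal.radical_pow _ hn0, hprime.radical]
  have hne : Ideal.span (Set.range x) ^ n ≠ ⊤ := by
    intro h
    exact hprime.ne_top (top_le_iff.mp (h ▸ Ideal.pow_le_self hn0))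
  refine ⟨?_, hrad, ?_⟩
  · rw [Ideal.isPrimary_iff]
    refine ⟨hne, fun {a b} hab => ?_⟩
    by_cases hb : b ∈ Ideal.span (Set.range x)
    · right
      rw [hrad]
      exact hb
    · left
      exact key n b a hb (mul_comm a b ▸ hab)
  · ext z
    simp only [Set.mem_setOf_eq, SetLike.mem_coe]
    constructor
    · rintro ⟨t, ht, htz⟩
      exact key n t z ht htz
    · intro hz
      exact ⟨1, fun h => hprime.ne_top ((Ideal.eq_top_iff_one _).mpr h), by rwa [one_mul]⟩
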